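/- The variable elimination algorithm is correct: iterating the elimination step over all n variables (in any order given by a bijection O on {0..<n}) starting from a list fs of properly scoped functions yields a list of scope-free functions whose sum of values (on the empty assignment) equals max_{x ∈ X} Σ_{f ∈ fs} f(x). -/

import Mathlib

open BigOperators

variable {n : ℕ}

/-- One step of variable elimination: eliminate variable `l` by replacing all functions whose
scope contains `l` by a single new function maximizing their sum over `D l`. -/
noncomputable def elimStep (D : Fin n → Type*) [∀ i, Fintype (D i)] [∀ i, Nonempty (D i)]
    (l : Fin n) (fs : List ((((i : Fin n) → D i) → ℝ) × Finset (Fin n))) :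
    List ((((i : Fin n) → D i) → ℝ) × Finset (Fin n)) :=
  let E := fs.filter (fun f => l ∈ f.2)
  let E' := fs.filter (fun f => l ∉ f.2)
  ((fun x => ⨆ y : D l, ((E.map (fun f => f.1 (Function.update x l y))).sum)),
    (E.foldr (fun (f : (((i : Fin n) → D i) → ℝ) × Finset (Fin n)) s => f.2 ∪ s) ∅).erase l) :: E'

section Aux

variable (D : Fin n → Type*) [∀ i, Fintype (D i)] [∀ i, Nonempty (D i)]

lemma bddR {ι : Type*} [Finite ι] (g : ι → ℝ) : BddAbove (Set.range g) :=
  Set.Finite.bddAbove (Set.finite_range g)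

lemma myciSup_add {ι : Type*} [Finite ι] [Nonempty ι] (f : ι → ℝ) (c : ℝ) :
    (⨆ i, f i) + c = ⨆ i, (f i + c) := by
  apply le_antisymm
  · have h : (⨆ i, f i) ≤ (⨆ i, (f i + c)) - c :=
      ciSup_le fun i => le_sub_iff_add_le.mpr (le_ciSup (bddR (fun i => f i + c)) i)
    linarith
  · exact ciSup_le fun i => add_le_add_left (le_ciSup (bddR _) i) c

lemma sum_filter_split {α : Type*} (p : α → Prop) [DecidablePred p] (h : α → ℝ)
    (gs : List α) :
    (((gs.filter (fun a => p a)).map h).sum : ℝ) + ((gs.filter (fun a => ¬ p a)).map h).sum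
      = (gs.map h).sum := by
  induction gs with
  | nil => simp
  | cons a t ih =>
    by_cases hp : p a <;> simp [List.filter_cons, hp, ← ih] <;> ring

abbrev FF := ((((i : Fin n) → D i) → ℝ) × Finset (Fin n))

lemma mem_foldr_union (E : List (FF D)) (j : Fin n) :
    j ∈ E.foldr (fun f s => f.2 ∪ s) ∅ ↔ ∃ f ∈ E, j ∈ f.2 := by
  induction E with
  | nil => simp
  | cons a t ih => simp [ih]

def Proper (gs : List (FF D)) : Prop :=
  ∀ f ∈ gs, ∀ x y : (i : Fin n) → D i, (∀ j ∈ f.2, x j = y j) → f.1 x = f.1 y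

lemma elimStep_proper (l : Fin n) (gs : List (FF D)) (h : Proper D gs) :
    Proper D (elimStep D l gs) := by
  intro f hf x y hxy
  simp only [elimStep, List.mem_cons] at hf
  rcases hf with hf | hf
  · subst hf
    simp only
    congr 1
    funext y0
    congr 1
    apply List.map_congr_left
    intro g hg
    have hgs : g ∈ gs := List.mem_of_mem_filter hg
    apply h g hgs
    intro j hj
    by_cases hjl : j = l
    · subst hjl; simp
    · have hjU : j ∈ (gs.filter (fun f => l ∈ f.2)).foldr
          (fun (f : FF D) s => f.2 ∪ s) ∅ := (mem_foldr_union D _ j).mpr ⟨g, hg, hj⟩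
      have := hxy j (by simpa using Finset.mem_erase.mpr ⟨hjl, hjU⟩)
      simpa [Function.update_of_ne hjl] using this
  · exact h f (List.mem_of_mem_filter hf) x y hxy

lemma elimStep_sum (l : Fin n) (gs : List (FF D)) (h : Proper D gs)
    (x : (i : Fin n) → D i) :
    ((elimStep D l gs).map (fun f => f.1 x)).sum
      = ⨆ y : D l, ((gs.map (fun f => f.1 (Function.update x l y))).sum) := by
  have key : ∀ y : D l,
      ((gs.map (fun f => f.1 (Function.update x l y))).sum : ℝ)
        = ((gs.filter (fun f => l ∈ f.2)).map
            (fun f => f.1 (Function.update x l y))).sum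
          + ((gs.filter (fun f => l ∉ f.2)).map (fun f => f.1 x)).sum := by
    intro y
    rw [← sum_filter_split (fun f : FF D => l ∈ f.2) (fun f => f.1 (Function.update x l y)) gs]
    congr 1
    congr 1
    apply List.map_congr_left
    intro g hg
    have hl : l ∉ g.2 := by
      have := List.of_mem_filter hg; simpa using this
    apply h g (List.mem_of_mem_filter hg)
    intro j hj
    have hjl : j ≠ l := fun e => hl (e ▸ hj)
    simp [Function.update_of_ne hjl]
  simp only [elimStep, List.map_cons, List.sum_cons]
  rw [myciSup_add]
  congr 1
  funext y
  rw [key y]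

lemma elimStep_self_notMem (l : Fin n) (gs : List (FF D)) :
    ∀ f ∈ elimStep D l gs, l ∉ f.2 := by
  intro f hf
  simp only [elimStep, List.mem_cons] at hf
  rcases hf with hf | hf
  · subst hf; exact Finset.notMem_erase l _
  · have := List.of_mem_filter hf; simpa using this

lemma elimStep_notMem (l m : Fin n) (gs : List (FF D)) (h : ∀ f ∈ gs, l ∉ f.2) :
    ∀ f ∈ elimStep D m gs, l ∉ f.2 := by
  intro f hf
  simp only [elimStep, List.mem_cons] at hf
  rcases hf with hf | hf
  · subst hf
    intro hl
    have hl' := Finset.mem_of_mem_erase hl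
    rcases (mem_foldr_union D _ l).mp hl' with ⟨g, hg, hgl⟩
    exact h g (List.mem_of_mem_filter hg) hgl
  · exact h f (List.mem_of_mem_filter hf)

lemma fold_notMem (l : Fin n) :
    ∀ (L : List (Fin n)) (gs : List (FF D)), (∀ f ∈ gs, l ∉ f.2) →
      ∀ f ∈ L.foldl (fun gs m => elimStep D m gs) gs, l ∉ f.2 := by
  intro L
  induction L with
  | nil => intro gs h; exact h
  | cons m t ih =>
    intro gs h
    exact ih _ (elimStep_notMem D l m gs h)

lemma fold_scope :
    ∀ (L : List (Fin n)) (gs : List (FF D)),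
      ∀ f ∈ L.foldl (fun gs m => elimStep D m gs) gs, ∀ l ∈ L, l ∉ f.2 := by
  intro L
  induction L with
  | nil => intro gs f hf l hl; simp at hl
  | cons m t ih =>
    intro gs f hf l hl
    rcases List.mem_cons.mp hl with rfl | hl
    · exact fold_notMem D l t _ (elimStep_self_notMem D l gs) f hf
    · exact ih _ f hf l hl

def updOn (x z : (i : Fin n) → D i) (L : List (Fin n)) : (i : Fin n) → D i :=
  fun i => if i ∈ L then z i else x i

lemma fold_sum :
    ∀ (L : List (Fin n)) (gs : List (FF D)), Proper D gs →
      ∀ x : (i : Fin n) → D i,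
      ((L.foldl (fun gs m => elimStep D m gs) gs).map (fun f => f.1 x)).sum
        = ⨆ z : (i : Fin n) → D i, ((gs.map (fun f => f.1 (updOn D x z L))).sum) := by
  intro L
  induction L with
  | nil =>
    intro gs _ x
    have : ∀ z : (i : Fin n) → D i, updOn D x z [] = x := by
      intro z; funext i; simp [updOn]
    simp only [List.foldl_nil, this]
    exact (ciSup_const).symm
  | cons l t ih =>
    intro gs hgs x
    rw [List.foldl_cons, ih _ (elimStep_proper D l gs hgs) x]
    have hupd : ∀ (z : (i : Fin n) → D i) (y : D l),
        Function.update (updOn D x z t) l y = updOn D x (Function.update z l y) (l :: t) := by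
      intro z y
      funext i
      by_cases hil : i = l
      · subst hil; simp [updOn]
      · by_cases hit : i ∈ t <;>
          simp [updOn, Function.update_of_ne hil, hit, hil]
    have hstep : ∀ z : (i : Fin n) → D i,
        ((elimStep D l gs).map (fun f => f.1 (updOn D x z t))).sum
          = ⨆ y : D l, ((gs.map
              (fun f => f.1 (updOn D x (Function.update z l y) (l :: t)))).sum) := by
      intro z
      rw [elimStep_sum D l gs hgs]
      congr 1
      funext y
      rw [hupd z y]
    simp only [hstep]
    set A : ((i : Fin n) → D i) → ℝ :=
      fun w => ((gs.map (fun f => f.1 (updOn D x w (l :: t)))).sum) with hA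
    apply le_antisymm
    · exact ciSup_le fun z => ciSup_le fun y => le_ciSup (bddR A) (Function.update z l y)
    · apply ciSup_le
      intro z
      have h1 : A z = A (Function.update z l (z l)) := by rw [Function.update_eq_self]
      calc A z = A (Function.update z l (z l)) := h1
        _ ≤ ⨆ y : D l, A (Function.update z l y) := le_ciSup (bddR (fun y : D l => A (Function.update z l y))) (z l)
        _ ≤ ⨆ z' : (i : Fin n) → D i, ⨆ y : D l, A (Function.update z' l y) :=
            le_ciSup (bddR (fun z' : (i : Fin n) → D i => ⨆ y : D l, A (Function.update z' l y))) z

end Aux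

/-- correctness of variable elimination.  Iterating the elimination step over all
`n` variables, in the order given by a bijection `O`, starting from a list `fs` of properly
scoped functions, yields a list of scope-free functions whose sum of values (at any assignment
`x₀`, playing the role of the empty assignment) equals `⨆ x, ∑ f ∈ fs, f x`. -/
theorem variable_elimination_correct (D : Fin n → Type*)
    [∀ i, Fintype (D i)] [∀ i, Nonempty (D i)]
    (fs : List ((((i : Fin n) → D i) → ℝ) × Finset (Fin n)))
    (O : Fin n → Fin n) (hO : Function.Bijective O)
    (hscope : ∀ f ∈ fs, ∀ x y : (i : Fin n) → D i,
      (∀ j ∈ f.2, x j = y j) → f.1 x = f.1 y) :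
    (∀ f ∈ (List.finRange n).foldl (fun gs i => elimStep D (O i) gs) fs, f.2 = ∅) ∧
    (∀ x₀ : (i : Fin n) → D i,
      (((List.finRange n).foldl (fun gs i => elimStep D (O i) gs) fs).map
          (fun f => f.1 x₀)).sum =
        ⨆ x : (i : Fin n) → D i, ((fs.map (fun f => f.1 x)).sum)) := by
  have hfold : (List.finRange n).foldl (fun gs i => elimStep D (O i) gs) fs
      = ((List.finRange n).map O).foldl (fun gs m => elimStep D m gs) fs := by
    rw [List.foldl_map]
  have hmemL : ∀ l : Fin n, l ∈ (List.finRange n).map O := by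
    intro l
    rcases hO.2 l with ⟨i, rfl⟩
    exact List.mem_map.mpr ⟨i, List.mem_finRange i, rfl⟩
  constructor
  · intro f hf
    rw [hfold] at hf
    apply Finset.eq_empty_iff_forall_notMem.mpr
    intro l hl
    exact fold_scope D _ fs f hf l (hmemL l) hl
  · intro x₀
    rw [hfold, fold_sum D _ fs hscope x₀]
    congr 1
    funext z
    congr 1
    have : updOn D x₀ z ((List.finRange n).map O) = z := by
      funext i; simp [updOn, hmemL i]
    rw [this]
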